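/- Asymmetric tame product estimate: let n ≥ 1 and s ≥ s₀ > n/2. There exist constants C(s₀), C(s) (depending only on s₀, s, n) such that for all u, v : ℤ^n → ℂ with ‖u‖_s, ‖v‖_s < ∞, the convolution u∗v (defined by (u∗v)_k := Σ_{k'∈ℤ^n} u_{k−k'} v_{k'}) is well defined and satisfies ‖u∗v‖_s ≤ C(s₀) ‖u‖_s ‖v‖_{s₀} + C(s) ‖u‖_{s₀} ‖v‖_s. (This is the Fourier-coefficient form of the tame product estimate ‖uv‖_{H^s} ≤ C(s₀)‖u‖_{H^s}‖v‖_{H^{s₀}} + C(s)‖u‖_{H^{s₀}}‖v‖_{H^s} on the torus 𝕋^n.) -/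

import Mathlib

open scoped ENNReal NNReal
open MeasureTheory

/-- The weight `⟨k⟩ = max(1,|k|)` with `|k|` the sup norm of `k ∈ ℤⁿ`. -/
noncomputable def wgt {n : ℕ} (k : Fin n → ℤ) : ℝ≥0∞ :=
  ((max 1 (Finset.univ.sup fun i => (k i).natAbs) : ℕ) : ℝ≥0∞)

/-- The weighted ℓ² norm `‖u‖ₛ = (Σ_k ⟨k⟩^{2s}|u_k|²)^{1/2}` (possibly `+∞`). -/
noncomputable def wnorm (n : ℕ) (s : ℝ) (u : (Fin n → ℤ) → ℂ) : ℝ≥0∞ :=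
  (∑' k : Fin n → ℤ, wgt k ^ (2 * s) * (‖u k‖₊ : ℝ≥0∞) ^ (2 : ℕ)) ^ (1 / 2 : ℝ)

namespace TameAux

/-- one-dimensional weight -/
noncomputable def wgt1 (m : ℤ) : ℝ≥0∞ := ((max 1 m.natAbs : ℕ) : ℝ≥0∞)

lemma one_le_wgt {n : ℕ} (k : Fin n → ℤ) : 1 ≤ wgt k := by
  unfold wgt
  rw [show (1 : ℝ≥0∞) = ((1 : ℕ) : ℝ≥0∞) by norm_num]
  exact_mod_cast le_max_left 1 (Finset.univ.sup fun i => (k i).natAbs)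

lemma wgt_ne_zero {n : ℕ} (k : Fin n → ℤ) : wgt k ≠ 0 :=
  fun h => by simpa [h] using one_le_wgt k

lemma wgt_ne_top {n : ℕ} (k : Fin n → ℤ) : wgt k ≠ ⊤ := by
  unfold wgt; exact ENNReal.natCast_ne_top _

lemma one_le_wgt1 (m : ℤ) : 1 ≤ wgt1 m := by
  unfold wgt1
  rw [show (1 : ℝ≥0∞) = ((1 : ℕ) : ℝ≥0∞) by norm_num]
  exact_mod_cast le_max_left 1 m.natAbs

lemma wgt1_ne_zero (m : ℤ) : wgt1 m ≠ 0 := fun h => by simpa [h] using one_le_wgt1 m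

lemma wgt1_ne_top (m : ℤ) : wgt1 m ≠ ⊤ := ENNReal.natCast_ne_top _

lemma wgt1_le_wgt {n : ℕ} (k : Fin n → ℤ) (i : Fin n) : wgt1 (k i) ≤ wgt k := by
  unfold wgt1 wgt
  have : max 1 (k i).natAbs ≤ max 1 (Finset.univ.sup fun j => (k j).natAbs) :=
    max_le_max (le_refl 1) (Finset.le_sup (f := fun j => (k j).natAbs) (Finset.mem_univ i))
  exact_mod_cast this

/-- triangle inequality for the weight -/
lemma wgt_triangle {n : ℕ} (k k' : Fin n → ℤ) : wgt k ≤ wgt (k - k') + wgt k' := by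
  unfold wgt
  rw [← Nat.cast_add]
  refine Nat.cast_le.mpr (max_le (le_add_right (le_max_left _ _)) (Finset.sup_le fun i _ => ?_))
  have h1 : (k i).natAbs ≤ ((k - k') i).natAbs + (k' i).natAbs := by
    rw [Pi.sub_apply]
    calc (k i).natAbs = ((k i - k' i) + k' i).natAbs := by ring_nf
    _ ≤ (k i - k' i).natAbs + (k' i).natAbs := Int.natAbs_add_le _ _
  refine h1.trans (add_le_add ?_ ?_)
  · exact le_max_of_le_right
      (Finset.le_sup (f := fun j => ((k - k') j).natAbs) (Finset.mem_univ i))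
  · exact le_max_of_le_right
      (Finset.le_sup (f := fun j => (k' j).natAbs) (Finset.mem_univ i))

/-- antitone rpow for nonpositive exponents -/
lemma rpow_le_rpow_nonpos {x y : ℝ≥0∞} (hx : x ≠ 0) (hxy : x ≤ y) {q : ℝ} (hq : q ≤ 0) :
    y ^ q ≤ x ^ q := by
  rw [← neg_neg q, ENNReal.rpow_neg y, ENNReal.rpow_neg x]
  exact ENNReal.inv_le_inv.mpr (ENNReal.rpow_le_rpow hxy (neg_nonneg.2 hq))

/-- rpow of a finite product -/
lemma prod_rpow {ι : Type*} (s : Finset ι) (x : ι → ℝ≥0∞) (ht : ∀ i ∈ s, x i ≠ ⊤) (q : ℝ) :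
    (∏ i ∈ s, x i) ^ q = ∏ i ∈ s, x i ^ q := by
  classical
  induction s using Finset.induction_on with
  | empty => simp
  | insert a t hnot ih =>
    rw [Finset.prod_insert hnot, Finset.prod_insert hnot,
      ENNReal.mul_rpow_of_ne_top (ht a (Finset.mem_insert_self a t))
        (ENNReal.prod_lt_top fun i hi => lt_top_iff_ne_top.mpr
          (ht i (Finset.mem_insert_of_mem hi))).ne,
      ih fun i hi => ht i (Finset.mem_insert_of_mem hi)]

/-- factorization of a product sum over `Fin n → ℤ` -/
lemma tsum_pi_prod (h : ℤ → ℝ≥0∞) : ∀ n : ℕ,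
    ∑' k : Fin n → ℤ, ∏ i, h (k i) = (∑' m : ℤ, h m) ^ n := by
  intro n
  induction n with
  | zero =>
    rw [tsum_eq_single (fun _ => 0) (fun b hb => absurd (Subsingleton.elim b _) hb)]
    simp
  | succ n ih =>
    rw [← (Fin.consEquiv (fun _ : Fin (n+1) => ℤ)).tsum_eq]
    have : ∀ p : ℤ × (Fin n → ℤ),
        (∏ i, h ((Fin.consEquiv (fun _ : Fin (n+1) => ℤ)) p i)) = h p.1 * ∏ i, h (p.2 i) := by
      intro p
      rw [Fin.prod_univ_succ]
      simp [Fin.consEquiv]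
    rw [tsum_congr this, ENNReal.tsum_prod']
    simp_rw [ENNReal.tsum_mul_left, ENNReal.tsum_mul_right]
    rw [ih, pow_succ, mul_comm]

/-- one-dimensional summability -/
lemma tsum_wgt1_lt_top {b : ℝ} (hb : 1 < b) : ∑' m : ℤ, wgt1 m ^ (-b) < ⊤ := by
  have hfnn : ∀ m : ℤ, 0 ≤ ((max 1 m.natAbs : ℕ) : ℝ) ^ (-b) :=
    fun m => Real.rpow_nonneg (by positivity) _
  have hsum : Summable (fun m : ℤ => ((max 1 m.natAbs : ℕ) : ℝ) ^ (-b)) := by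
    have hg : Summable fun m : ℤ => |(m : ℝ)| ^ (-b) := Real.summable_abs_int_rpow hb
    have heq : (fun m : ℤ => ((max 1 m.natAbs : ℕ) : ℝ) ^ (-b))
        = Function.update (fun m : ℤ => |(m : ℝ)| ^ (-b)) 0 1 := by
      funext m
      by_cases hm : m = 0
      · subst hm
        rw [Function.update_self]
        norm_num
      · rw [Function.update_of_ne hm]
        have h2 : (max 1 m.natAbs : ℕ) = m.natAbs :=
          max_eq_right (Nat.one_le_iff_ne_zero.mpr (Int.natAbs_ne_zero.mpr hm))
        rw [h2]
        congr 1
        rw [Nat.cast_natAbs, Int.cast_abs]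
    rw [heq]
    exact hg.update 0 1
  have key : ∀ m : ℤ, wgt1 m ^ (-b) = ENNReal.ofReal (((max 1 m.natAbs : ℕ) : ℝ) ^ (-b)) := by
    intro m
    have h1 : (0 : ℝ) < ((max 1 m.natAbs : ℕ) : ℝ) := by positivity
    rw [← ENNReal.ofReal_rpow_of_pos h1, ENNReal.ofReal_natCast]
    rfl
  rw [tsum_congr key, ← ENNReal.ofReal_tsum_of_nonneg hfnn hsum]
  exact ENNReal.ofReal_lt_top

/-- summability of the weight to a power `< -n` over `ℤⁿ` -/
lemma tsum_wgt_lt_top {n : ℕ} (hn : 1 ≤ n) {p : ℝ} (hp : (n : ℝ) < p) :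
    ∑' k : Fin n → ℤ, wgt k ^ (-p) < ⊤ := by
  have hn0 : (n : ℝ) ≠ 0 := by positivity
  set q : ℝ := -p / n with hq
  have hq0 : q ≤ 0 := by
    rw [hq]
    have h0n : (0:ℝ) ≤ (n:ℝ) := by positivity
    apply div_nonpos_of_nonpos_of_nonneg (by linarith) h0n
  have hb : 1 < p / n := (one_lt_div (by positivity)).mpr hp
  have key : ∀ k : Fin n → ℤ, wgt k ^ (-p) ≤ ∏ i, wgt1 (k i) ^ q := by
    intro k
    have h1 : (∏ i, wgt1 (k i)) ≤ wgt k ^ (n : ℕ) := by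
      have := Finset.prod_le_pow_card Finset.univ (fun i => wgt1 (k i)) (wgt k)
        (fun i _ => wgt1_le_wgt k i)
      simpa using this
    have h2 : (wgt k ^ (n : ℕ)) ^ q ≤ (∏ i, wgt1 (k i)) ^ q :=
      rpow_le_rpow_nonpos (Finset.prod_ne_zero_iff.mpr fun i _ => wgt1_ne_zero _) h1 hq0
    have h3 : (wgt k ^ (n : ℕ)) ^ q = wgt k ^ (-p) := by
      rw [← ENNReal.rpow_natCast, ← ENNReal.rpow_mul]
      congr 1
      rw [hq]
      field_simp
    rw [← h3]
    refine h2.trans_eq ?_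
    exact prod_rpow Finset.univ _ (fun i _ => wgt1_ne_top _) q
  calc ∑' k : Fin n → ℤ, wgt k ^ (-p) ≤ ∑' k : Fin n → ℤ, ∏ i, wgt1 (k i) ^ q :=
        ENNReal.tsum_le_tsum key
    _ = (∑' m : ℤ, wgt1 m ^ q) ^ n := tsum_pi_prod (fun m => wgt1 m ^ q) n
    _ < ⊤ := by
        refine ENNReal.pow_lt_top ?_
        have : q = -(p / n) := by rw [hq]; ring
        rw [this]
        exact tsum_wgt1_lt_top hb

/-- Cauchy–Schwarz for `ℝ≥0∞`-valued tsums on a countable type -/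
lemma tsum_cs {α : Type*} [Countable α] [MeasurableSpace α] [MeasurableSingletonClass α]
    (f g : α → ℝ≥0∞) :
    ∑' a, f a * g a ≤ (∑' a, f a ^ (2 : ℝ)) ^ (1/2 : ℝ) * (∑' a, g a ^ (2 : ℝ)) ^ (1/2 : ℝ) := by
  have hpq : Real.HolderConjugate 2 2 := Real.HolderConjugate.two_two
  have := ENNReal.lintegral_mul_le_Lp_mul_Lq (Measure.count (α := α)) hpq
    (measurable_of_countable f).aemeasurable (measurable_of_countable g).aemeasurable
  simpa [lintegral_count, Pi.mul_apply] using this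


lemma rpow_two_eq {x : ℝ≥0∞} : x ^ (2 : ℝ) = x * x := by
  rw [show (2 : ℝ) = ((2 : ℕ) : ℝ) by norm_num, ENNReal.rpow_natCast, sq]

lemma sq_add_le (X Y : ℝ≥0∞) : (X + Y) ^ (2 : ℝ) ≤ 3 * X ^ (2 : ℝ) + 3 * Y ^ (2 : ℝ) := by
  have hxy : X * Y ≤ X * X + Y * Y := by
    rcases le_total X Y with h | h
    · exact le_trans (mul_le_mul_left h Y) le_add_self
    · exact le_trans (mul_le_mul_right h X) (self_le_add_right _ _)
  rw [rpow_two_eq, rpow_two_eq, rpow_two_eq]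
  calc (X + Y) * (X + Y) = X * X + (X * Y + X * Y) + Y * Y := by ring
  _ ≤ X * X + ((X * X + Y * Y) + (X * X + Y * Y)) + Y * Y := by gcongr
  _ = 3 * (X * X) + 3 * (Y * Y) := by ring

/-- `wnorm` in terms of squares of `wgt^t * ‖·‖`. -/
lemma wnorm_eq {n : ℕ} (t : ℝ) (w : (Fin n → ℤ) → ℂ) :
    wnorm n t w = (∑' k : Fin n → ℤ, (wgt k ^ t * (‖w k‖₊ : ℝ≥0∞)) ^ (2 : ℝ)) ^ (1/2 : ℝ) := by
  unfold wnorm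
  congr 1
  refine tsum_congr fun k => ?_
  rw [ENNReal.mul_rpow_of_nonneg _ _ (by norm_num : (0:ℝ) ≤ 2), ← ENNReal.rpow_mul,
    show t * 2 = 2 * t by ring,
    show ((‖w k‖₊ : ℝ≥0∞)) ^ (2 : ℝ) = ((‖w k‖₊ : ℝ≥0∞)) ^ (2 : ℕ) by
      rw [show (2 : ℝ) = ((2 : ℕ) : ℝ) by norm_num, ENNReal.rpow_natCast]]

lemma wnorm_mono {n : ℕ} {t₀ t : ℝ} (h : t₀ ≤ t) (w : (Fin n → ℤ) → ℂ) :
    wnorm n t₀ w ≤ wnorm n t w := by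
  unfold wnorm
  refine ENNReal.rpow_le_rpow (ENNReal.tsum_le_tsum fun k => ?_) (by norm_num)
  exact mul_le_mul_left
    (ENNReal.rpow_le_rpow_of_exponent_le (one_le_wgt k) (by linarith)) _

/-- ℓ¹-bound by the weighted ℓ² norm -/
lemma l1_le {n : ℕ} (t : ℝ) (w : (Fin n → ℤ) → ℂ) :
    ∑' k : Fin n → ℤ, (‖w k‖₊ : ℝ≥0∞) ≤
      (∑' k : Fin n → ℤ, wgt k ^ (-(2 * t))) ^ (1/2 : ℝ) * wnorm n t w := by
  have cs := tsum_cs (fun k : Fin n → ℤ => wgt k ^ (-t))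
    (fun k => wgt k ^ t * (‖w k‖₊ : ℝ≥0∞))
  have h1 : ∀ k : Fin n → ℤ,
      wgt k ^ (-t) * (wgt k ^ t * (‖w k‖₊ : ℝ≥0∞)) = (‖w k‖₊ : ℝ≥0∞) := by
    intro k
    rw [← mul_assoc, ← ENNReal.rpow_add _ _ (wgt_ne_zero k) (wgt_ne_top k)]
    simp
  have h2 : ∀ k : Fin n → ℤ, (wgt k ^ (-t)) ^ (2 : ℝ) = wgt k ^ (-(2 * t)) := by
    intro k
    rw [← ENNReal.rpow_mul]
    congr 1
    ring
  calc ∑' k : Fin n → ℤ, (‖w k‖₊ : ℝ≥0∞)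
      = ∑' k : Fin n → ℤ, wgt k ^ (-t) * (wgt k ^ t * (‖w k‖₊ : ℝ≥0∞)) :=
        (tsum_congr h1).symm
    _ ≤ (∑' k : Fin n → ℤ, (wgt k ^ (-t)) ^ (2:ℝ)) ^ (1/2 : ℝ) *
        (∑' k : Fin n → ℤ, (wgt k ^ t * (‖w k‖₊ : ℝ≥0∞)) ^ (2:ℝ)) ^ (1/2 : ℝ) := cs
    _ = (∑' k : Fin n → ℤ, wgt k ^ (-(2 * t))) ^ (1/2 : ℝ) * wnorm n t w := by
        rw [tsum_congr h2, wnorm_eq]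

/-- Young's inequality `ℓ² ∗ ℓ¹ → ℓ²` for `ℝ≥0∞`-valued sequences on `ℤⁿ`. -/
lemma young {n : ℕ} (A B : (Fin n → ℤ) → ℝ≥0∞) :
    ∑' k : Fin n → ℤ, (∑' k' : Fin n → ℤ, A (k - k') * B k') ^ (2 : ℝ) ≤
      (∑' k : Fin n → ℤ, B k) ^ (2 : ℝ) * ∑' k : Fin n → ℤ, A k ^ (2 : ℝ) := by
  have key : ∀ k : Fin n → ℤ, (∑' k' : Fin n → ℤ, A (k - k') * B k') ^ (2 : ℝ) ≤
      (∑' k' : Fin n → ℤ, B k') * ∑' k' : Fin n → ℤ, A (k - k') ^ (2 : ℝ) * B k' := by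
    intro k
    have cs := tsum_cs (fun k' : Fin n → ℤ => B k' ^ (1/2 : ℝ))
      (fun k' => A (k - k') * B k' ^ (1/2 : ℝ))
    have h1 : ∀ k' : Fin n → ℤ,
        B k' ^ (1/2 : ℝ) * (A (k - k') * B k' ^ (1/2 : ℝ)) = A (k - k') * B k' := by
      intro k'
      have : B k' ^ (1/2 : ℝ) * B k' ^ (1/2 : ℝ) = B k' := by
        rw [← ENNReal.rpow_add_of_nonneg _ _ (by norm_num) (by norm_num)]
        norm_num
      calc B k' ^ (1/2 : ℝ) * (A (k - k') * B k' ^ (1/2 : ℝ))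
          = A (k - k') * (B k' ^ (1/2 : ℝ) * B k' ^ (1/2 : ℝ)) := by ring
        _ = A (k - k') * B k' := by rw [this]
    have h2 : ∀ k' : Fin n → ℤ,
        (A (k - k') * B k' ^ (1/2 : ℝ)) ^ (2 : ℝ) = A (k - k') ^ (2 : ℝ) * B k' := by
      intro k'
      rw [ENNReal.mul_rpow_of_nonneg _ _ (by norm_num : (0:ℝ) ≤ 2), ← ENNReal.rpow_mul]
      norm_num
    have h3 : ∀ k' : Fin n → ℤ, (B k' ^ (1/2 : ℝ)) ^ (2 : ℝ) = B k' := by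
      intro k'
      rw [← ENNReal.rpow_mul]
      norm_num
    have hhalf : ∀ x : ℝ≥0∞, (x ^ (1/2 : ℝ)) ^ (2 : ℝ) = x := fun x => by
      rw [← ENNReal.rpow_mul]
      norm_num
    calc (∑' k' : Fin n → ℤ, A (k - k') * B k') ^ (2 : ℝ)
        = (∑' k' : Fin n → ℤ,
            B k' ^ (1/2 : ℝ) * (A (k - k') * B k' ^ (1/2 : ℝ))) ^ (2 : ℝ) := by
          rw [tsum_congr h1]
      _ ≤ ((∑' k' : Fin n → ℤ, (B k' ^ (1/2 : ℝ)) ^ (2 : ℝ)) ^ (1/2 : ℝ) *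
            (∑' k' : Fin n → ℤ, (A (k - k') * B k' ^ (1/2 : ℝ)) ^ (2 : ℝ)) ^ (1/2 : ℝ))
              ^ (2 : ℝ) := ENNReal.rpow_le_rpow cs (by norm_num)
      _ = (∑' k' : Fin n → ℤ, B k') * ∑' k' : Fin n → ℤ, A (k - k') ^ (2 : ℝ) * B k' := by
          rw [ENNReal.mul_rpow_of_nonneg _ _ (by norm_num : (0:ℝ) ≤ 2), hhalf, hhalf,
            tsum_congr h3, tsum_congr h2]
  calc ∑' k : Fin n → ℤ, (∑' k' : Fin n → ℤ, A (k - k') * B k') ^ (2 : ℝ)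
      ≤ ∑' k : Fin n → ℤ, (∑' k' : Fin n → ℤ, B k') *
          ∑' k' : Fin n → ℤ, A (k - k') ^ (2 : ℝ) * B k' := ENNReal.tsum_le_tsum key
    _ = (∑' k' : Fin n → ℤ, B k') *
          ∑' k : Fin n → ℤ, ∑' k' : Fin n → ℤ, A (k - k') ^ (2 : ℝ) * B k' :=
        ENNReal.tsum_mul_left
    _ = (∑' k' : Fin n → ℤ, B k') *
          ∑' k' : Fin n → ℤ, ∑' k : Fin n → ℤ, A (k - k') ^ (2 : ℝ) * B k' := by
        rw [ENNReal.tsum_comm]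
    _ = (∑' k' : Fin n → ℤ, B k') *
          ∑' k' : Fin n → ℤ, B k' * ∑' k : Fin n → ℤ, A (k - k') ^ (2 : ℝ) := by
        congr 1
        refine tsum_congr fun k' => ?_
        rw [ENNReal.tsum_mul_right, mul_comm]
    _ = (∑' k' : Fin n → ℤ, B k') *
          ∑' k' : Fin n → ℤ, B k' * ∑' j : Fin n → ℤ, A j ^ (2 : ℝ) := by
        congr 1
        refine tsum_congr fun k' => ?_
        congr 1
        exact (Equiv.subRight k').tsum_eq (fun j => A j ^ (2 : ℝ))
    _ = (∑' k : Fin n → ℤ, B k) ^ (2 : ℝ) * ∑' k : Fin n → ℤ, A k ^ (2 : ℝ) := by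
        rw [ENNReal.tsum_mul_right, rpow_two_eq]
        ring

end TameAux

open TameAux in
/-- Asymmetric tame product estimate in Fourier-coefficient (convolution) form:
for `s ≥ s₀ > n/2` there are constants `C(s₀), C(s)` such that for all `u, v` with
finite `s`-norms the convolution `u∗v` is well defined and
`‖u∗v‖ₛ ≤ C(s₀)‖u‖ₛ‖v‖_{s₀} + C(s)‖u‖_{s₀}‖v‖ₛ`. -/
theorem asymmetric_tame_product (n : ℕ) (hn : 1 ≤ n) (s s₀ : ℝ)
    (hs₀ : (n : ℝ) / 2 < s₀) (hs : s₀ ≤ s) :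
    ∃ C₀ C : ℝ, 0 < C₀ ∧ 0 < C ∧
      ∀ u v : (Fin n → ℤ) → ℂ, wnorm n s u < ⊤ → wnorm n s v < ⊤ →
        (∀ k : Fin n → ℤ, Summable fun k' : Fin n → ℤ => u (k - k') * v k') ∧
        wnorm n s (fun k => ∑' k' : Fin n → ℤ, u (k - k') * v k') ≤
          ENNReal.ofReal C₀ * wnorm n s u * wnorm n s₀ v +
            ENNReal.ofReal C * wnorm n s₀ u * wnorm n s v := by
  classical
  have hnR : (1 : ℝ) ≤ (n : ℝ) := by exact_mod_cast hn
  have hs₀pos : 0 < s₀ := lt_of_lt_of_le (by linarith) le_rfl |>.trans_le hs₀.le |>.trans_le le_rfl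
  have hspos : 0 < s := lt_of_lt_of_le hs₀pos hs
  -- the basic constant
  set Ken : ℝ≥0∞ := ∑' k : Fin n → ℤ, wgt k ^ (-(2 * s₀)) with hKenDef
  have hKenTop : Ken < ⊤ := tsum_wgt_lt_top hn (by linarith)
  have hKen1 : (1 : ℝ≥0∞) ≤ Ken := by
    refine le_trans ?_ (ENNReal.le_tsum 0)
    have h0 : wgt (0 : Fin n → ℤ) = 1 := by simp [wgt]
    rw [h0, ENNReal.one_rpow]
  have hKh_top : Ken ^ (1/2 : ℝ) ≠ ⊤ :=
    ENNReal.rpow_ne_top_of_nonneg (by norm_num) hKenTop.ne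
  have hKh1 : (1 : ℝ≥0∞) ≤ Ken ^ (1/2 : ℝ) := by
    calc (1 : ℝ≥0∞) = 1 ^ (1/2 : ℝ) := (ENNReal.one_rpow _).symm
    _ ≤ Ken ^ (1/2 : ℝ) := ENNReal.rpow_le_rpow hKen1 (by norm_num)
  set c : ℝ≥0∞ := ((2 : ℝ≥0∞) ^ s) ^ (2 : ℝ) * 3 with hcDef
  set D : ℝ≥0∞ := c ^ (1/2 : ℝ) * Ken ^ (1/2 : ℝ) with hDDef
  have h2s_top : (2 : ℝ≥0∞) ^ s ≠ ⊤ :=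
    ENNReal.rpow_ne_top_of_nonneg hspos.le (by norm_num)
  have hc_top : c ≠ ⊤ := by
    rw [hcDef]
    exact ENNReal.mul_ne_top (ENNReal.rpow_ne_top_of_nonneg (by norm_num) h2s_top)
      (by norm_num)
  have hD_top : D ≠ ⊤ :=
    ENNReal.mul_ne_top (ENNReal.rpow_ne_top_of_nonneg (by norm_num) hc_top) hKh_top
  have h2s1 : (1 : ℝ≥0∞) ≤ (2 : ℝ≥0∞) ^ s := by
    calc (1 : ℝ≥0∞) = (2 : ℝ≥0∞) ^ (0 : ℝ) := ENNReal.rpow_zero.symm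
    _ ≤ (2 : ℝ≥0∞) ^ s := ENNReal.rpow_le_rpow_of_exponent_le one_le_two hspos.le
  have hc1 : (1 : ℝ≥0∞) ≤ c := by
    rw [hcDef]
    calc (1 : ℝ≥0∞) = 1 * 1 := (one_mul 1).symm
    _ ≤ ((2 : ℝ≥0∞) ^ s) ^ (2 : ℝ) * 3 := by
        refine mul_le_mul' ?_ (by norm_num)
        calc (1 : ℝ≥0∞) = 1 ^ (2 : ℝ) := (ENNReal.one_rpow _).symm
        _ ≤ ((2 : ℝ≥0∞) ^ s) ^ (2 : ℝ) := ENNReal.rpow_le_rpow h2s1 (by norm_num)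
  have hD1 : (1 : ℝ≥0∞) ≤ D := by
    rw [hDDef]
    calc (1 : ℝ≥0∞) = 1 * 1 := (one_mul 1).symm
    _ ≤ c ^ (1/2 : ℝ) * Ken ^ (1/2 : ℝ) := by
        refine mul_le_mul' ?_ hKh1
        calc (1 : ℝ≥0∞) = 1 ^ (1/2 : ℝ) := (ENNReal.one_rpow _).symm
        _ ≤ c ^ (1/2 : ℝ) := ENNReal.rpow_le_rpow hc1 (by norm_num)
  have hD0 : D ≠ 0 := fun h => by simpa [h] using hD1
  have hDtoReal : ENNReal.ofReal D.toReal = D := ENNReal.ofReal_toReal hD_top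
  refine ⟨D.toReal, D.toReal, ENNReal.toReal_pos hD0 hD_top,
    ENNReal.toReal_pos hD0 hD_top, ?_⟩
  intro u v hu hv
  set au : (Fin n → ℤ) → ℝ≥0∞ := fun k => ((‖u k‖₊ : ℝ≥0) : ℝ≥0∞) with hauDef
  set av : (Fin n → ℤ) → ℝ≥0∞ := fun k => ((‖v k‖₊ : ℝ≥0) : ℝ≥0∞) with havDef
  -- finiteness of square sums
  have Sfin : ∀ (t : ℝ) (w : (Fin n → ℤ) → ℂ), wnorm n t w < ⊤ →
      ∑' k : Fin n → ℤ, (wgt k ^ t * ((‖w k‖₊ : ℝ≥0) : ℝ≥0∞)) ^ (2 : ℝ) < ⊤ := by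
    intro t w hw
    rw [wnorm_eq] at hw
    by_contra hS
    rw [not_lt, top_le_iff] at hS
    rw [hS, ENNReal.top_rpow_of_pos (by norm_num)] at hw
    exact absurd hw (lt_irrefl ⊤)
  -- ℓ¹ bounds
  have hu1 : ∑' k : Fin n → ℤ, au k ≤ Ken ^ (1/2 : ℝ) * wnorm n s₀ u := l1_le s₀ u
  have hv1 : ∑' k : Fin n → ℤ, av k ≤ Ken ^ (1/2 : ℝ) * wnorm n s₀ v := l1_le s₀ v
  have hu1top : ∑' k : Fin n → ℤ, au k < ⊤ :=
    lt_of_le_of_lt hu1 (ENNReal.mul_lt_top hKh_top.lt_top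
      (lt_of_le_of_lt (wnorm_mono hs u) hu))
  have hv1top : ∑' k : Fin n → ℤ, av k < ⊤ :=
    lt_of_le_of_lt hv1 (ENNReal.mul_lt_top hKh_top.lt_top
      (lt_of_le_of_lt (wnorm_mono hs v) hv))
  -- summability of the convolution
  have hshift : ∀ (f : (Fin n → ℤ) → ℝ≥0∞) (k : Fin n → ℤ),
      ∑' k' : Fin n → ℤ, f (k - k') = ∑' j : Fin n → ℤ, f j := by
    intro f k
    have h := (Equiv.subLeft k).tsum_eq f
    calc ∑' k' : Fin n → ℤ, f (k - k')
        = ∑' k' : Fin n → ℤ, f ((Equiv.subLeft k) k') :=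
          tsum_congr fun k' => by rw [Equiv.subLeft_apply]
      _ = ∑' j : Fin n → ℤ, f j := h
  have hconv_fin : ∀ k : Fin n → ℤ, ∑' k' : Fin n → ℤ, au (k - k') * av k' < ⊤ := by
    intro k
    have hb : ∑' k' : Fin n → ℤ, au (k - k') * av k' ≤
        (∑' j : Fin n → ℤ, au j) * ∑' j : Fin n → ℤ, av j := by
      calc ∑' k' : Fin n → ℤ, au (k - k') * av k'
          ≤ ∑' k' : Fin n → ℤ, au (k - k') * ∑' j : Fin n → ℤ, av j :=
            ENNReal.tsum_le_tsum fun k' => mul_le_mul_right (ENNReal.le_tsum k') _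
        _ = (∑' k' : Fin n → ℤ, au (k - k')) * ∑' j : Fin n → ℤ, av j :=
            ENNReal.tsum_mul_right
        _ = (∑' j : Fin n → ℤ, au j) * ∑' j : Fin n → ℤ, av j := by rw [hshift au k]
    exact lt_of_le_of_lt hb (ENNReal.mul_lt_top hu1top hv1top)
  have hcoe : ∀ k k' : Fin n → ℤ,
      ((‖u (k - k') * v k'‖₊ : ℝ≥0) : ℝ≥0∞) = au (k - k') * av k' := by
    intro k k'
    rw [nnnorm_mul, ENNReal.coe_mul]
  have hsummable_nn : ∀ k : Fin n → ℤ, Summable fun k' : Fin n → ℤ => ‖u (k - k') * v k'‖₊ := by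
    intro k
    refine ENNReal.tsum_coe_ne_top_iff_summable.mp ?_
    rw [tsum_congr (hcoe k)]
    exact (hconv_fin k).ne
  have hsummable : ∀ k : Fin n → ℤ, Summable fun k' : Fin n → ℤ => u (k - k') * v k' :=
    fun k => (hsummable_nn k).of_nnnorm
  refine ⟨hsummable, ?_⟩
  -- pointwise norm bound on the convolution
  have hnn_conv : ∀ k : Fin n → ℤ,
      ((‖∑' k' : Fin n → ℤ, u (k - k') * v k'‖₊ : ℝ≥0) : ℝ≥0∞) ≤
        ∑' k' : Fin n → ℤ, au (k - k') * av k' := by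
    intro k
    calc ((‖∑' k' : Fin n → ℤ, u (k - k') * v k'‖₊ : ℝ≥0) : ℝ≥0∞)
        ≤ ((∑' k' : Fin n → ℤ, ‖u (k - k') * v k'‖₊ : ℝ≥0) : ℝ≥0∞) :=
          ENNReal.coe_le_coe.mpr (nnnorm_tsum_le (hsummable_nn k))
      _ = ∑' k' : Fin n → ℤ, ((‖u (k - k') * v k'‖₊ : ℝ≥0) : ℝ≥0∞) :=
          ENNReal.coe_tsum (hsummable_nn k)
      _ = ∑' k' : Fin n → ℤ, au (k - k') * av k' := tsum_congr (hcoe k)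
  -- weight splitting
  have hwsplit : ∀ k k' : Fin n → ℤ,
      wgt k ^ s ≤ (2 : ℝ≥0∞) ^ s * (wgt (k - k') ^ s + wgt k' ^ s) := by
    intro k k'
    calc wgt k ^ s ≤ (wgt (k - k') + wgt k') ^ s :=
          ENNReal.rpow_le_rpow (wgt_triangle k k') hspos.le
      _ ≤ (2 * max (wgt (k - k')) (wgt k')) ^ s := by
          refine ENNReal.rpow_le_rpow ?_ hspos.le
          rw [two_mul]
          exact add_le_add (le_max_left _ _) (le_max_right _ _)
      _ = (2 : ℝ≥0∞) ^ s * (max (wgt (k - k')) (wgt k')) ^ s :=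
          ENNReal.mul_rpow_of_nonneg _ _ hspos.le
      _ ≤ (2 : ℝ≥0∞) ^ s * (wgt (k - k') ^ s + wgt k' ^ s) := by
          refine mul_le_mul_right ?_ _
          rcases max_cases (wgt (k - k')) (wgt k') with ⟨h, _⟩ | ⟨h, _⟩ <;> rw [h]
          · exact self_le_add_right _ _
          · exact le_add_self
  -- the two convolution pieces
  set X : (Fin n → ℤ) → ℝ≥0∞ :=
    fun k => ∑' k' : Fin n → ℤ, (wgt (k - k') ^ s * au (k - k')) * av k' with hXDef
  set Y : (Fin n → ℤ) → ℝ≥0∞ :=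
    fun k => ∑' k' : Fin n → ℤ, au (k - k') * (wgt k' ^ s * av k') with hYDef
  -- pointwise estimate
  have hpt : ∀ k : Fin n → ℤ,
      wgt k ^ s * ((‖∑' k' : Fin n → ℤ, u (k - k') * v k'‖₊ : ℝ≥0) : ℝ≥0∞) ≤
        (2 : ℝ≥0∞) ^ s * (X k + Y k) := by
    intro k
    calc wgt k ^ s * ((‖∑' k' : Fin n → ℤ, u (k - k') * v k'‖₊ : ℝ≥0) : ℝ≥0∞)
        ≤ wgt k ^ s * ∑' k' : Fin n → ℤ, au (k - k') * av k' :=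
          mul_le_mul_right (hnn_conv k) _
      _ = ∑' k' : Fin n → ℤ, wgt k ^ s * (au (k - k') * av k') :=
          ENNReal.tsum_mul_left.symm
      _ ≤ ∑' k' : Fin n → ℤ,
            ((2 : ℝ≥0∞) ^ s * (wgt (k - k') ^ s + wgt k' ^ s)) * (au (k - k') * av k') :=
          ENNReal.tsum_le_tsum fun k' => mul_le_mul_left (hwsplit k k') _
      _ = ∑' k' : Fin n → ℤ, (2 : ℝ≥0∞) ^ s *
            ((wgt (k - k') ^ s * au (k - k')) * av k' + au (k - k') * (wgt k' ^ s * av k')) :=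
          tsum_congr fun k' => by ring
      _ = (2 : ℝ≥0∞) ^ s * ∑' k' : Fin n → ℤ,
            ((wgt (k - k') ^ s * au (k - k')) * av k' + au (k - k') * (wgt k' ^ s * av k')) :=
          ENNReal.tsum_mul_left
      _ = (2 : ℝ≥0∞) ^ s * (X k + Y k) := by rw [ENNReal.tsum_add]
  -- sum of squares estimate
  have hsq : ∑' k : Fin n → ℤ,
      (wgt k ^ s * ((‖∑' k' : Fin n → ℤ, u (k - k') * v k'‖₊ : ℝ≥0) : ℝ≥0∞)) ^ (2 : ℝ) ≤
        c * ((∑' k : Fin n → ℤ, X k ^ (2 : ℝ)) + ∑' k : Fin n → ℤ, Y k ^ (2 : ℝ)) := by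
    calc ∑' k : Fin n → ℤ,
        (wgt k ^ s * ((‖∑' k' : Fin n → ℤ, u (k - k') * v k'‖₊ : ℝ≥0) : ℝ≥0∞)) ^ (2 : ℝ)
        ≤ ∑' k : Fin n → ℤ, ((2 : ℝ≥0∞) ^ s * (X k + Y k)) ^ (2 : ℝ) :=
          ENNReal.tsum_le_tsum fun k => ENNReal.rpow_le_rpow (hpt k) (by norm_num)
      _ = ∑' k : Fin n → ℤ, ((2 : ℝ≥0∞) ^ s) ^ (2 : ℝ) * (X k + Y k) ^ (2 : ℝ) :=
          tsum_congr fun k => ENNReal.mul_rpow_of_nonneg _ _ (by norm_num)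
      _ ≤ ∑' k : Fin n → ℤ,
            ((2 : ℝ≥0∞) ^ s) ^ (2 : ℝ) * (3 * X k ^ (2 : ℝ) + 3 * Y k ^ (2 : ℝ)) :=
          ENNReal.tsum_le_tsum fun k => mul_le_mul_right (sq_add_le (X k) (Y k)) _
      _ = ∑' k : Fin n → ℤ, (c * X k ^ (2 : ℝ) + c * Y k ^ (2 : ℝ)) :=
          tsum_congr fun k => by rw [hcDef]; ring
      _ = c * (∑' k : Fin n → ℤ, X k ^ (2 : ℝ)) + c * ∑' k : Fin n → ℤ, Y k ^ (2 : ℝ) := by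
          rw [ENNReal.tsum_add, ENNReal.tsum_mul_left, ENNReal.tsum_mul_left]
      _ = c * ((∑' k : Fin n → ℤ, X k ^ (2 : ℝ)) + ∑' k : Fin n → ℤ, Y k ^ (2 : ℝ)) := by
          rw [mul_add]
  -- Young's inequality for each piece
  have hX : ∑' k : Fin n → ℤ, X k ^ (2 : ℝ) ≤
      (∑' j : Fin n → ℤ, av j) ^ (2 : ℝ) *
        ∑' j : Fin n → ℤ, (wgt j ^ s * au j) ^ (2 : ℝ) :=
    young (fun j => wgt j ^ s * au j) av
  have hY : ∑' k : Fin n → ℤ, Y k ^ (2 : ℝ) ≤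
      (∑' j : Fin n → ℤ, au j) ^ (2 : ℝ) *
        ∑' j : Fin n → ℤ, (wgt j ^ s * av j) ^ (2 : ℝ) := by
    have hYk : ∀ k : Fin n → ℤ,
        Y k = ∑' j : Fin n → ℤ, (wgt (k - j) ^ s * av (k - j)) * au j := by
      intro k
      have h := (Equiv.subLeft k).tsum_eq
        (fun j => (wgt (k - j) ^ s * av (k - j)) * au j)
      calc Y k = ∑' k' : Fin n → ℤ,
            (fun j => (wgt (k - j) ^ s * av (k - j)) * au j) ((Equiv.subLeft k) k') := by
            rw [hYDef]
            refine tsum_congr fun k' => ?_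
            simp only [Equiv.subLeft_apply, sub_sub_cancel]
            ring
        _ = ∑' j : Fin n → ℤ, (wgt (k - j) ^ s * av (k - j)) * au j := h
    rw [tsum_congr fun k => congrArg (· ^ (2 : ℝ)) (hYk k)]
    exact young (fun j => wgt j ^ s * av j) au
  -- assembling
  have hsq_half : ∀ x : ℝ≥0∞, (x ^ (2 : ℝ)) ^ (1/2 : ℝ) = x := fun x => by
    rw [← ENNReal.rpow_mul]
    norm_num
  have hXhalf : (∑' k : Fin n → ℤ, X k ^ (2 : ℝ)) ^ (1/2 : ℝ) ≤
      (Ken ^ (1/2 : ℝ) * wnorm n s₀ v) * wnorm n s u := by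
    calc (∑' k : Fin n → ℤ, X k ^ (2 : ℝ)) ^ (1/2 : ℝ)
        ≤ ((∑' j : Fin n → ℤ, av j) ^ (2 : ℝ) *
            ∑' j : Fin n → ℤ, (wgt j ^ s * au j) ^ (2 : ℝ)) ^ (1/2 : ℝ) :=
          ENNReal.rpow_le_rpow hX (by norm_num)
      _ = (∑' j : Fin n → ℤ, av j) *
            (∑' j : Fin n → ℤ, (wgt j ^ s * au j) ^ (2 : ℝ)) ^ (1/2 : ℝ) := by
          rw [ENNReal.mul_rpow_of_nonneg _ _ (by norm_num : (0:ℝ) ≤ 1/2), hsq_half]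
      _ = (∑' j : Fin n → ℤ, av j) * wnorm n s u := by rw [← wnorm_eq]
      _ ≤ (Ken ^ (1/2 : ℝ) * wnorm n s₀ v) * wnorm n s u := mul_le_mul_left hv1 _
  have hYhalf : (∑' k : Fin n → ℤ, Y k ^ (2 : ℝ)) ^ (1/2 : ℝ) ≤
      (Ken ^ (1/2 : ℝ) * wnorm n s₀ u) * wnorm n s v := by
    calc (∑' k : Fin n → ℤ, Y k ^ (2 : ℝ)) ^ (1/2 : ℝ)
        ≤ ((∑' j : Fin n → ℤ, au j) ^ (2 : ℝ) *
            ∑' j : Fin n → ℤ, (wgt j ^ s * av j) ^ (2 : ℝ)) ^ (1/2 : ℝ) :=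
          ENNReal.rpow_le_rpow hY (by norm_num)
      _ = (∑' j : Fin n → ℤ, au j) *
            (∑' j : Fin n → ℤ, (wgt j ^ s * av j) ^ (2 : ℝ)) ^ (1/2 : ℝ) := by
          rw [ENNReal.mul_rpow_of_nonneg _ _ (by norm_num : (0:ℝ) ≤ 1/2), hsq_half]
      _ = (∑' j : Fin n → ℤ, au j) * wnorm n s v := by rw [← wnorm_eq]
      _ ≤ (Ken ^ (1/2 : ℝ) * wnorm n s₀ u) * wnorm n s v := mul_le_mul_left hu1 _
  have main : wnorm n s (fun k => ∑' k' : Fin n → ℤ, u (k - k') * v k') ≤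
      D * wnorm n s u * wnorm n s₀ v + D * wnorm n s₀ u * wnorm n s v := by
    calc wnorm n s (fun k => ∑' k' : Fin n → ℤ, u (k - k') * v k')
        = (∑' k : Fin n → ℤ,
            (wgt k ^ s * ((‖∑' k' : Fin n → ℤ, u (k - k') * v k'‖₊ : ℝ≥0) : ℝ≥0∞)) ^ (2 : ℝ))
              ^ (1/2 : ℝ) := wnorm_eq s _
      _ ≤ (c * ((∑' k : Fin n → ℤ, X k ^ (2 : ℝ)) +
            ∑' k : Fin n → ℤ, Y k ^ (2 : ℝ))) ^ (1/2 : ℝ) :=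
          ENNReal.rpow_le_rpow hsq (by norm_num)
      _ = c ^ (1/2 : ℝ) * ((∑' k : Fin n → ℤ, X k ^ (2 : ℝ)) +
            ∑' k : Fin n → ℤ, Y k ^ (2 : ℝ)) ^ (1/2 : ℝ) :=
          ENNReal.mul_rpow_of_nonneg _ _ (by norm_num)
      _ ≤ c ^ (1/2 : ℝ) * ((∑' k : Fin n → ℤ, X k ^ (2 : ℝ)) ^ (1/2 : ℝ) +
            (∑' k : Fin n → ℤ, Y k ^ (2 : ℝ)) ^ (1/2 : ℝ)) :=
          mul_le_mul_right (ENNReal.rpow_add_le_add_rpow _ _ (by norm_num) (by norm_num)) _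
      _ ≤ c ^ (1/2 : ℝ) * ((Ken ^ (1/2 : ℝ) * wnorm n s₀ v) * wnorm n s u +
            (Ken ^ (1/2 : ℝ) * wnorm n s₀ u) * wnorm n s v) :=
          mul_le_mul_right (add_le_add hXhalf hYhalf) _
      _ = D * wnorm n s u * wnorm n s₀ v + D * wnorm n s₀ u * wnorm n s v := by
          rw [hDDef]
          ring
  rw [hDtoReal]
  exact main
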